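/- Suppose R₂² = {0} (where R₂ = {r ∈ R : 2r = 0}), G has an abelian index-2 subgroup N, σ : G → {±1} has kernel N, x* = x for x ∉ N, and n* = a⁻¹na for n ∈ N, a ∉ N. Then the symmetric elements (RG)⁺ = {α : α♯ = α} under the oriented involution ♯ form a commutative set. -/

import Mathlib

/-- The oriented involution on the group ring. -/
noncomputable def orientedSharp {R : Type*} [CommRing R] {G : Type*} [Group G]
    (st : G → G) (σ : G →* ℤˣ) (α : MonoidAlgebra R G) : MonoidAlgebra R G :=
  Finsupp.sum α.coeff fun g r => MonoidAlgebra.single (st g) (((σ g : ℤ) : R) * r)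

/-- if `R₂² = {0}`, `N = ker σ` is abelian of index 2,
`x* = x` for `x ∉ N` and `n* = a⁻¹na` for `n ∈ N`, `a ∉ N`, then
the symmetric elements of `RG` commute. -/
theorem symmetric_commute_case_one {R : Type*} [CommRing R] {G : Type*} [Group G]
    (hR2 : ∀ r r' : R, 2 * r = 0 → 2 * r' = 0 → r * r' = 0)
    (σ : G →* ℤˣ) (hidx : σ.ker.index = 2)
    (hab : ∀ n ∈ σ.ker, ∀ m ∈ σ.ker, n * m = m * n)
    (st : G → G)
    (hout : ∀ x : G, x ∉ σ.ker → st x = x)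
    (hin : ∀ n ∈ σ.ker, ∀ a : G, a ∉ σ.ker → st n = a⁻¹ * n * a) :
    ∀ α β : MonoidAlgebra R G,
      orientedSharp st σ α = α → orientedSharp st σ β = β → α * β = β * α := by
  classical
  intro α β hα hβ
  -- a witness outside the kernel
  obtain ⟨a₀, ha₀⟩ : ∃ a, a ∉ σ.ker := by
    by_contra h
    push_neg at h
    have htop : σ.ker = ⊤ := (Subgroup.eq_top_iff' _).2 h
    rw [htop, Subgroup.index_top] at hidx
    norm_num at hidx
  -- σ is -1 off the kernel
  have hσneg : ∀ g : G, g ∉ σ.ker → σ g = -1 := by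
    intro g hg
    rcases Int.units_eq_one_or (σ g) with h | h
    · exact absurd (MonoidHom.mem_ker.mpr h) hg
    · exact h
  -- conjugation preserves the kernel
  have hσconj : ∀ g k : G, σ (g⁻¹ * k * g) = σ k := by
    intro g k
    rw [map_mul, map_mul, map_inv]
    rw [mul_right_comm, inv_mul_cancel, one_mul]
  have hker_conj : ∀ g k : G, (g⁻¹ * k * g ∈ σ.ker ↔ k ∈ σ.ker) := by
    intro g k
    rw [MonoidHom.mem_ker, MonoidHom.mem_ker, hσconj]
  -- st maps kernel into kernel
  have hstN : ∀ n ∈ σ.ker, st n ∈ σ.ker := by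
    intro n hn
    rw [hin n hn a₀ ha₀]
    exact (hker_conj a₀ n).mpr hn
  -- st is injective
  have hst_inj : Function.Injective st := by
    intro x y hxy
    by_cases hx : x ∈ σ.ker <;> by_cases hy : y ∈ σ.ker
    · rw [hin x hx a₀ ha₀, hin y hy a₀ ha₀] at hxy
      exact mul_left_cancel (mul_right_cancel hxy)
    · exact absurd ((hout y hy) ▸ hxy ▸ hstN x hx) hy
    · exact absurd ((hout x hx) ▸ hxy.symm ▸ hstN y hy) hx
    · rwa [hout x hx, hout y hy] at hxy
  -- coefficient formula for the sharp
  have hcoef : ∀ (γ : MonoidAlgebra R G) (g : G),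
      (orientedSharp st σ γ).coeff (st g) = ((σ g : ℤ) : R) * γ.coeff g := by
    intro γ g
    unfold orientedSharp
    simp only [MonoidAlgebra.coeff_finsuppSum, MonoidAlgebra.coeff_single]
    rw [Finsupp.sum_apply, Finsupp.sum, Finset.sum_eq_single g]
    · rw [Finsupp.single_apply, if_pos rfl]
    · intro b _ hbg
      rw [Finsupp.single_apply, if_neg (fun h => hbg (hst_inj h))]
    · intro hg
      rw [Finsupp.notMem_support_iff.mp hg, mul_zero, Finsupp.single_apply]
      simp
  -- symmetric coefficient relation
  have hrel : ∀ γ : MonoidAlgebra R G, orientedSharp st σ γ = γ →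
      ∀ g : G, γ.coeff (st g) = ((σ g : ℤ) : R) * γ.coeff g := by
    intro γ hγ g
    conv_lhs => rw [← hγ]
    exact hcoef γ g
  -- off the kernel, coefficients of symmetric elements are 2-torsion
  have h2 : ∀ γ : MonoidAlgebra R G, orientedSharp st σ γ = γ →
      ∀ g : G, g ∉ σ.ker → 2 * γ.coeff g = 0 := by
    intro γ hγ g hg
    have h := hrel γ hγ g
    rw [hout g hg, hσneg g hg] at h
    have hc : (((-1 : ℤˣ) : ℤ) : R) = -1 := by norm_num
    rw [hc] at h
    linear_combination h
  -- symmetric elements are conjugation-invariant on the kernel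
  have hconj : ∀ γ : MonoidAlgebra R G, orientedSharp st σ γ = γ →
      ∀ k ∈ σ.ker, ∀ g : G, γ.coeff (g⁻¹ * k * g) = γ.coeff k := by
    intro γ hγ k hk g
    by_cases hg : g ∈ σ.ker
    · rw [mul_assoc, hab k hk g hg, ← mul_assoc, inv_mul_cancel, one_mul]
    · have h := hrel γ hγ k
      rw [hin k hk g hg, MonoidHom.mem_ker.mp hk] at h
      simpa using h
  -- central elements
  have hcentral : ∀ ν : MonoidAlgebra R G, (∀ g k : G, ν.coeff (g⁻¹ * k * g) = ν.coeff k) →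
      ∀ γ : MonoidAlgebra R G, ν * γ = γ * ν := by
    intro ν hν γ
    induction γ using MonoidAlgebra.induction with
    | zero => simp
    | single_add a b f _ _ ih =>
      rw [mul_add, add_mul, ih]
      congr 1
      ext y
      rw [MonoidAlgebra.coeff_mul_single_apply, MonoidAlgebra.coeff_single_mul_apply, mul_comm]
      congr 1
      have h : a⁻¹ * y = a⁻¹ * (y * a⁻¹) * a := by group
      rw [h, hν]
  -- torsion products vanish
  have hτzero : ∀ τ τ' : MonoidAlgebra R G, (∀ g, 2 * τ.coeff g = 0) → (∀ g, 2 * τ'.coeff g = 0) →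
      τ * τ' = 0 := by
    intro τ τ' h h'
    ext k
    rw [MonoidAlgebra.coeff_mul]
    rw [Finsupp.sum]
    simp only [MonoidAlgebra.coeff_zero, Finsupp.coe_zero, Pi.zero_apply]
    apply Finset.sum_eq_zero
    intro a₁ _
    rw [Finsupp.sum]
    apply Finset.sum_eq_zero
    intro a₂ _
    rw [hR2 (τ.coeff a₁) (τ'.coeff a₂) (h a₁) (h' a₂), ite_self]
  -- decompose
  set να : MonoidAlgebra R G := MonoidAlgebra.ofCoeff (α.coeff.filter (· ∈ σ.ker)) with hναdef
  set τα : MonoidAlgebra R G := MonoidAlgebra.ofCoeff (α.coeff.filter (fun g => ¬ g ∈ σ.ker)) with hταdef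
  set νβ : MonoidAlgebra R G := MonoidAlgebra.ofCoeff (β.coeff.filter (· ∈ σ.ker)) with hνβdef
  set τβ : MonoidAlgebra R G := MonoidAlgebra.ofCoeff (β.coeff.filter (fun g => ¬ g ∈ σ.ker)) with hτβdef
  have hαsplit : α = να + τα := congrArg MonoidAlgebra.ofCoeff (Finsupp.filter_add_filter_not α.coeff _).symm
  have hβsplit : β = νβ + τβ := congrArg MonoidAlgebra.ofCoeff (Finsupp.filter_add_filter_not β.coeff _).symm
  have hνconj : ∀ (γ : MonoidAlgebra R G), orientedSharp st σ γ = γ →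
      ∀ g k : G, (γ.coeff.filter (· ∈ σ.ker)) (g⁻¹ * k * g) = (γ.coeff.filter (· ∈ σ.ker)) k := by
    intro γ hγ g k
    by_cases hk : k ∈ σ.ker
    · rw [Finsupp.filter_apply_pos _ _ ((hker_conj g k).mpr hk),
        Finsupp.filter_apply_pos _ _ hk]
      exact hconj γ hγ k hk g
    · rw [Finsupp.filter_apply_neg _ _ (fun h => hk ((hker_conj g k).mp h)),
        Finsupp.filter_apply_neg _ _ hk]
  have hτ2 : ∀ (γ : MonoidAlgebra R G), orientedSharp st σ γ = γ →
      ∀ g : G, 2 * (γ.coeff.filter (fun g => ¬ g ∈ σ.ker)) g = 0 := by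
    intro γ hγ g
    by_cases hg : g ∈ σ.ker
    · rw [Finsupp.filter_apply_neg (fun g => ¬ g ∈ σ.ker) γ.coeff (not_not_intro hg), mul_zero]
    · rw [Finsupp.filter_apply_pos (fun g => ¬ g ∈ σ.ker) γ.coeff hg]
      exact h2 γ hγ g hg
  have hνα := hcentral να (hνconj α hα)
  have hνβ := hcentral νβ (hνconj β hβ)
  have hττ : τα * τβ = 0 := hτzero _ _ (hτ2 α hα) (hτ2 β hβ)
  have hττ' : τβ * τα = 0 := hτzero _ _ (hτ2 β hβ) (hτ2 α hα)
  rw [hαsplit, hβsplit, add_mul, add_mul, mul_add, mul_add, mul_add, mul_add,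
    hττ, hττ', hνα νβ, hνα τβ, ← hνβ τα]
  abel
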